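/- Let T be an admissible partition tree of a compact linearly ordered space K. If a, b ∈ T_α are distinct elements of the same level T_α, then a ∩ b contains at most one point. -/

import Mathlib

open Set

/-- A partial order is a tree order if the set of strict predecessors of
each element is well-ordered. -/
def IsTreeOrder (T : Type) [PartialOrder T] : Prop :=
  ∀ x : T, IsWellOrder {y : T // y < x} (fun a b => (a : T) < (b : T))

/-- The height of an element of a tree: the order type of its set of strict
predecessors. -/
noncomputable def treeHt {T : Type} [PartialOrder T] (hT : IsTreeOrder T) (x : T) : Ordinal :=
  @Ordinal.type {y : T // y < x} (fun a b => (a : T) < (b : T)) (hT x)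

/-- The level of a tree of order `α`. -/
def treeLevel {T : Type} [PartialOrder T] (hT : IsTreeOrder T) (α : Ordinal) : Set T :=
  {x : T | treeHt hT x = α}

/-- `f` is a cofinal sequence in the limit ordinal `α`: it is a strictly increasing
`cf α`-indexed sequence of ordinals below `α` whose supremum is `α`. -/
def IsCofinalSeq (α : Ordinal) (f : Ordinal → Ordinal) : Prop :=
  (∀ ξ η : Ordinal, ξ < η → η < α.cof.ord → f ξ < f η) ∧
  (∀ ξ : Ordinal, ξ < α.cof.ord → f ξ < α) ∧
  (∀ β : Ordinal, β < α → ∃ ξ : Ordinal, ξ < α.cof.ord ∧ β ≤ f ξ)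

/-- A subset `H` of the level `T_α` (`α` a limit ordinal) is simple if for some
cofinal sequence `(α_ξ)_{ξ < cf α}` in `α` there is an injective regressive map
from `H` into `⋃_{ξ < cf α} T_{α_ξ}`. -/
def TreeSimple {T : Type} [PartialOrder T] (hT : IsTreeOrder T) (α : Ordinal)
    (H : Set T) : Prop :=
  ∃ f : Ordinal → Ordinal, IsCofinalSeq α f ∧
    ∃ π : T → T, Set.InjOn π H ∧
      ∀ x ∈ H, π x < x ∧ ∃ ξ : Ordinal, ξ < α.cof.ord ∧ treeHt hT (π x) = f ξ

/-- A tree is Hausdorff if every nonempty totally ordered subset has at most one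
minimal upper bound. -/
def IsHausdorffTree (T : Type) [PartialOrder T] : Prop :=
  ∀ A : Set T, A.Nonempty → IsChain (· ≤ ·) A → ∀ u v : T,
    u ∈ upperBounds A → (∀ w ∈ upperBounds A, ¬ w < u) →
    v ∈ upperBounds A → (∀ w ∈ upperBounds A, ¬ w < v) → u = v

/-- The interval topology on a tree, generated by the sets `(x, z]` and `(0, z]`. -/
def intervalTopology (T : Type) [PartialOrder T] : TopologicalSpace T :=
  TopologicalSpace.generateFrom
    ({s : Set T | ∃ x z : T, s = Set.Ioc x z} ∪ {s : Set T | ∃ z : T, s = Set.Iic z})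

/-- `T`, together with the interpretation map `I` assigning to each element of `T` a
subset of `K`, is an admissible partition tree of the compact linearly ordered space `K`. -/
structure IsAdmissiblePartitionTree (K : Type) [LinearOrder K] [TopologicalSpace K]
    (T : Type) [PartialOrder T] (I : T → Set K) : Prop where
  /-- The order on `T` is a tree order. -/
  tree : IsTreeOrder T
  /-- The tree order is reverse inclusion of the associated intervals. -/
  le_iff : ∀ a b : T, a ≤ b ↔ I b ⊆ I a
  /-- Every member is a closed subset of `K`. -/
  closed : ∀ a : T, IsClosed (I a)
  /-- Every member is an interval of `K`. -/
  interval : ∀ a : T, (I a).OrdConnected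
  /-- Every member is non-trivial, i.e. has at least two points. -/
  nontrivial : ∀ a : T, ∃ x y : K, x ∈ I a ∧ y ∈ I a ∧ x ≠ y
  /-- The zeroth level consists precisely of (the element representing) `K` itself. -/
  root : ∀ a : T, treeHt tree a = 0 ↔ I a = Set.univ
  /-- The zeroth level is nonempty. -/
  root_exists : ∃ a : T, I a = Set.univ
  /-- Two-element members have no immediate successors. -/
  two_elt : ∀ a : T, (∃ x y : K, x ≠ y ∧ I a = {x, y}) → ¬ ∃ b : T, a ⋖ b
  /-- A member with at least three elements has exactly two immediate successors,
  splitting it at an interior point. -/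
  three_elt : ∀ a : T,
    (∃ x y z : K, x ≠ y ∧ y ≠ z ∧ x ≠ z ∧ x ∈ I a ∧ y ∈ I a ∧ z ∈ I a) →
    ∃ b c : T, a ⋖ b ∧ a ⋖ c ∧ b ≠ c ∧ (∀ d : T, a ⋖ d → d = b ∨ d = c) ∧
      ∃ x y z : K, x < y ∧ y < z ∧
        IsLeast (I a) x ∧ IsLeast (I b) x ∧ IsGreatest (I b) y ∧
        IsLeast (I c) y ∧ IsGreatest (I c) z ∧ IsGreatest (I a) z
  /-- For limit `α`, the members of level `α` are exactly the intersections of members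
  chosen from each earlier level. -/
  limit_level : ∀ α : Ordinal, Order.IsSuccLimit α → ∀ a : T,
    (treeHt tree a = α ↔ ∃ g : Ordinal → T, (∀ ξ : Ordinal, ξ < α → treeHt tree (g ξ) = ξ) ∧
      I a = ⋂ ξ ∈ Set.Iio α, I (g ξ))

lemma treeHt_eq_typein {T : Type} [PartialOrder T] (hT : IsTreeOrder T) {x y : T} (h : y < x) :
    treeHt hT y = @Ordinal.typein {z : T // z < x} (fun a b => (a : T) < (b : T)) (hT x) ⟨y, h⟩ := by
  haveI := hT x; haveI := hT y
  rw [← Ordinal.type_subrel]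
  refine Ordinal.type_eq.2 ⟨⟨⟨fun z => ⟨⟨z.1, z.2.trans h⟩, z.2⟩, fun w => ⟨w.1.1, w.2⟩,
    fun z => rfl, fun w => rfl⟩, Iff.rfl⟩⟩

lemma treeHt_lt_of_lt {T : Type} [PartialOrder T] (hT : IsTreeOrder T) {x y : T} (h : y < x) :
    treeHt hT y < treeHt hT x := by
  haveI := hT x
  rw [treeHt_eq_typein hT h]
  exact Ordinal.typein_lt_type _ _

lemma treeHt_inj_below {T : Type} [PartialOrder T] (hT : IsTreeOrder T) {x y z : T}
    (hy : y < x) (hz : z < x) (h : treeHt hT y = treeHt hT z) : y = z := by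
  haveI := hT x
  rcases trichotomous_of (fun (a b : {w : T // w < x}) => (a : T) < (b : T)) ⟨y, hy⟩ ⟨z, hz⟩ with
    hlt | heq | hgt
  · exact absurd h (treeHt_lt_of_lt hT hlt).ne
  · exact congrArg Subtype.val heq
  · exact absurd h.symm (treeHt_lt_of_lt hT hgt).ne

lemma exists_pred {T : Type} [PartialOrder T] (hT : IsTreeOrder T) {x : T} {ξ : Ordinal}
    (h : ξ < treeHt hT x) : ∃ y : T, y < x ∧ treeHt hT y = ξ := by
  haveI := hT x
  obtain ⟨y, hy⟩ := Ordinal.typein_surj (fun (a b : {w : T // w < x}) => (a : T) < (b : T)) h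
  exact ⟨y.1, y.2, (treeHt_eq_typein hT y.2).trans hy⟩

/-- Two distinct members of the same level of an admissible partition tree meet in at most
one point. -/
theorem stmt_12 {K : Type} [LinearOrder K] [TopologicalSpace K] [OrderTopology K]
    [CompactSpace K] [Nontrivial K]
    {T : Type} [PartialOrder T] {I : T → Set K}
    (hT : IsAdmissiblePartitionTree K T I)
    (α : Ordinal) (a b : T) (ha : treeHt hT.tree a = α) (hb : treeHt hT.tree b = α)
    (hab : a ≠ b) :
    (I a ∩ I b).Subsingleton := by
  induction α using Ordinal.induction generalizing a b with
  | h α IH =>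
  by_cases hsplit : ∃ c d : T, c < a ∧ d < b ∧ treeHt hT.tree c = treeHt hT.tree d ∧ c ≠ d
  · obtain ⟨c, d, hca, hdb, hcd, hne⟩ := hsplit
    have hξ : treeHt hT.tree c < α := ha ▸ treeHt_lt_of_lt hT.tree hca
    exact (IH _ hξ c d rfl hcd.symm hne).anti
      (inter_subset_inter ((hT.le_iff c a).1 hca.le) ((hT.le_iff d b).1 hdb.le))
  · push_neg at hsplit
    rcases Ordinal.zero_or_succ_or_isSuccLimit α with h0 | ⟨η, rfl⟩ | hlim
    · subst h0
      have hA := (hT.root a).1 ha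
      have hB := (hT.root b).1 hb
      exact absurd (le_antisymm ((hT.le_iff a b).2 (by rw [hA]; exact Set.subset_univ _))
        ((hT.le_iff b a).2 (by rw [hB]; exact Set.subset_univ _))) hab
    · -- successor case
      have hη : η < Order.succ η := Order.lt_succ η
      obtain ⟨c, hca, hc⟩ := exists_pred hT.tree (x := a) (ha ▸ hη)
      obtain ⟨c', hcb, hc'⟩ := exists_pred hT.tree (x := b) (hb ▸ hη)
      have hcc : c = c' := hsplit c c' hca hcb (hc.trans hc'.symm)
      subst hcc
      have hcova : c ⋖ a := by
        refine ⟨hca, fun d hcd hda => ?_⟩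
        have h1 : treeHt hT.tree d < Order.succ η := ha ▸ treeHt_lt_of_lt hT.tree hda
        have h2 : η < treeHt hT.tree d := hc ▸ treeHt_lt_of_lt hT.tree hcd
        exact absurd (Order.lt_succ_iff.1 h1) h2.not_ge
      have hcovb : c ⋖ b := by
        refine ⟨hcb, fun d hcd hdb => ?_⟩
        have h1 : treeHt hT.tree d < Order.succ η := hb ▸ treeHt_lt_of_lt hT.tree hdb
        have h2 : η < treeHt hT.tree d := hc ▸ treeHt_lt_of_lt hT.tree hcd
        exact absurd (Order.lt_succ_iff.1 h1) h2.not_ge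
      obtain ⟨x, y, hx, hy, hxy⟩ := hT.nontrivial c
      by_cases h3 : ∃ z ∈ I c, z ≠ x ∧ z ≠ y
      · obtain ⟨z, hz, hzx, hzy⟩ := h3
        obtain ⟨b', c', _, _, _, huniq, x₀, y₀, z₀, hxy₀, hyz₀, _, _, hGb, hLc, _, _⟩ :=
          hT.three_elt c ⟨x, y, z, hxy, hzy.symm, hzx.symm, hx, hy, hz⟩
        have key : (I b' ∩ I c').Subsingleton := by
          intro p hp q hq
          have hp' : p = y₀ := le_antisymm (hGb.2 hp.1) (hLc.2 hp.2)
          have hq' : q = y₀ := le_antisymm (hGb.2 hq.1) (hLc.2 hq.2)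
          rw [hp', hq']
        rcases huniq a hcova with rfl | rfl <;> rcases huniq b hcovb with rfl | rfl
        · exact absurd rfl hab
        · exact key
        · exact fun p hp q hq => key ⟨hp.2, hp.1⟩ ⟨hq.2, hq.1⟩
        · exact absurd rfl hab
      · push_neg at h3
        have hIc : I c = {x, y} := by
          apply Subset.antisymm
          · intro w hw
            by_cases hwx : w = x
            · exact Or.inl hwx
            · exact Or.inr (h3 w hw hwx)
          · rintro w (rfl | rfl)
            exacts [hx, hy]
        exact absurd ⟨a, hcova⟩ (hT.two_elt c ⟨x, y, hxy, hIc⟩)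
    · -- limit case
      obtain ⟨g, hg, hIa⟩ := (hT.limit_level α hlim a).1 ha
      obtain ⟨g', hg', hIb⟩ := (hT.limit_level α hlim b).1 hb
      have hgg : ∀ ξ : Ordinal, ξ < α → g ξ = g' ξ := by
        intro ξ hξ
        have h1 : g ξ < a := by
          have hle : g ξ ≤ a := (hT.le_iff _ _).2 (hIa ▸ biInter_subset_of_mem hξ)
          exact hle.lt_of_ne fun h =>
            hξ.ne (((hg ξ hξ).symm.trans (congrArg (treeHt hT.tree) h)).trans ha)
        have h2 : g' ξ < b := by
          have hle : g' ξ ≤ b := (hT.le_iff _ _).2 (hIb ▸ biInter_subset_of_mem hξ)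
          exact hle.lt_of_ne fun h =>
            hξ.ne (((hg' ξ hξ).symm.trans (congrArg (treeHt hT.tree) h)).trans hb)
        exact hsplit _ _ h1 h2 ((hg ξ hξ).trans (hg' ξ hξ).symm)
      have : I a = I b := by
        rw [hIa, hIb]
        exact iInter₂_congr fun ξ hξ => by rw [hgg ξ hξ]
      exact absurd (le_antisymm ((hT.le_iff a b).2 this.ge) ((hT.le_iff b a).2 this.le)) hab
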